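/- A set-valued map f : D → 2^Y is subconvexlike on D if and only if the set f(D) + int Y₊ is convex. -/

import Mathlib

open Pointwise

/-- A set-valued map `f` is subconvexlike on `D` iff `f(D) + int Y₊` is convex. -/
theorem subconvexlike_iff_add_interior_convex
    {X Y : Type*} [AddCommGroup Y] [Module ℝ Y]
    [TopologicalSpace Y] [IsTopologicalAddGroup Y] [ContinuousSMul ℝ Y]
    (D : Set X) (hD : D.Nonempty) (f : X → Set Y)
    (Ypos : Set Y) (hYconv : Convex ℝ Ypos) (hY0 : (0 : Y) ∈ Ypos)
    (hYcone : ∀ t : ℝ, 0 < t → t • Ypos ⊆ Ypos)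
    (hYint : (interior Ypos).Nonempty) :
    (∃ U : Set Y, U.Nonempty ∧ Bornology.IsVonNBounded ℝ U ∧
        ∀ x1 ∈ D, ∀ x2 ∈ D, ∀ α : ℝ, α ∈ Set.Ioo (0 : ℝ) 1 → ∀ ε : ℝ, 0 < ε →
          ε • U + α • f x1 + (1 - α) • f x2 ⊆ (⋃ x ∈ D, f x) + Ypos) ↔
      Convex ℝ ((⋃ x ∈ D, f x) + interior Ypos) := by
  set F := ⋃ x ∈ D, f x with hF
  -- Ypos is closed under addition
  have hPP : ∀ a ∈ Ypos, ∀ b ∈ Ypos, a + b ∈ Ypos := by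
    intro a ha b hb
    have h1 : (1/2 : ℝ) • a + (1/2 : ℝ) • b ∈ Ypos :=
      hYconv ha hb (by norm_num) (by norm_num) (by norm_num)
    have h2 : (2 : ℝ) • ((1/2 : ℝ) • a + (1/2 : ℝ) • b) ∈ Ypos :=
      hYcone 2 (by norm_num) (Set.smul_mem_smul_set h1)
    have : (2 : ℝ) • ((1/2 : ℝ) • a + (1/2 : ℝ) • b) = a + b := by
      rw [smul_add, smul_smul, smul_smul]; norm_num
    rwa [this] at h2
  -- Ypos + interior Ypos ⊆ interior Ypos
  have hA : ∀ p ∈ Ypos, ∀ c ∈ interior Ypos, p + c ∈ interior Ypos := by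
    intro p hp c hc
    rw [mem_interior_iff_mem_nhds] at hc ⊢
    have hcont : ContinuousAt (fun y : Y => y - p) (p + c) := by fun_prop
    have hpre : (fun y : Y => y - p) ⁻¹' Ypos ∈ nhds (p + c) := by
      apply hcont.preimage_mem_nhds
      simpa using hc
    refine Filter.mem_of_superset hpre ?_
    intro y hy
    have := hPP p hp (y - p) hy
    simpa using this
  -- interior Ypos is closed under positive scaling
  have hB : ∀ ε : ℝ, 0 < ε → ∀ c ∈ interior Ypos, ε • c ∈ interior Ypos := by
    intro ε hε c hc
    rw [mem_interior_iff_mem_nhds] at hc ⊢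
    have hcont : ContinuousAt (fun y : Y => ε⁻¹ • y) (ε • c) := by fun_prop
    have hpre : (fun y : Y => ε⁻¹ • y) ⁻¹' Ypos ∈ nhds (ε • c) := by
      apply hcont.preimage_mem_nhds
      simpa [smul_smul, inv_mul_cancel₀ hε.ne'] using hc
    refine Filter.mem_of_superset hpre ?_
    intro y hy
    have : ε • (ε⁻¹ • y) ∈ Ypos := hYcone ε hε (Set.smul_mem_smul_set hy)
    rwa [smul_smul, mul_inv_cancel₀ hε.ne', one_smul] at this
  constructor
  · rintro ⟨U, hUne, hUb, hsub⟩
    rintro y1 hy1 y2 hy2 α β hα hβ hαβ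
    rcases eq_or_lt_of_le hα with rfl | hα0
    · simpa [show β = 1 by linarith] using hy2
    rcases eq_or_lt_of_le hβ with rfl | hβ0
    · simpa [show α = 1 by linarith] using hy1
    have hβα : β = 1 - α := by linarith
    obtain ⟨a1, ha1F, c1, hc1, hy1eq⟩ := Set.mem_add.mp hy1
    obtain ⟨a2, ha2F, c2, hc2, hy2eq⟩ := Set.mem_add.mp hy2
    obtain ⟨x1, hx1, ha1⟩ := Set.mem_iUnion₂.mp ha1F
    obtain ⟨x2, hx2, ha2⟩ := Set.mem_iUnion₂.mp ha2F
    set c : Y := α • c1 + β • c2 with hc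
    have hcmem : c ∈ interior Ypos := hYconv.interior hc1 hc2 hα hβ hαβ
    -- find ε > 0 with ε • U ⊆ {v | c - v ∈ interior Ypos}
    have hWopen : IsOpen ((fun v : Y => c - v) ⁻¹' interior Ypos) :=
      isOpen_interior.preimage (by fun_prop)
    have hW0 : (0 : Y) ∈ (fun v : Y => c - v) ⁻¹' interior Ypos := by
      simpa using hcmem
    have habs : Absorbs ℝ ((fun v : Y => c - v) ⁻¹' interior Ypos) U :=
      hUb (hWopen.mem_nhds hW0)
    obtain ⟨r, hr⟩ := absorbs_iff_norm.mp habs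
    set t : ℝ := max r 1 with ht
    have ht1 : (1 : ℝ) ≤ t := le_max_right r 1
    have ht0 : (0 : ℝ) < t := lt_of_lt_of_le one_pos ht1
    have hUt : U ⊆ t • ((fun v : Y => c - v) ⁻¹' interior Ypos) := by
      apply hr
      rw [Real.norm_eq_abs, abs_of_pos ht0]
      exact le_max_left r 1
    set ε : ℝ := t⁻¹ with hε
    have hεpos : 0 < ε := inv_pos.mpr ht0
    obtain ⟨u0, hu0⟩ := hUne
    have hεu0 : c - ε • u0 ∈ interior Ypos := by
      obtain ⟨w, hw, hwu⟩ := hUt hu0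
      have : ε • u0 = w := by
        rw [← hwu, smul_smul, hε, inv_mul_cancel₀ ht0.ne', one_smul]
      rw [this]
      exact hw
    have hmem : ε • u0 + α • a1 + (1 - α) • a2 ∈ ε • U + α • f x1 + (1 - α) • f x2 :=
      Set.add_mem_add (Set.add_mem_add (Set.smul_mem_smul_set hu0)
        (Set.smul_mem_smul_set ha1)) (Set.smul_mem_smul_set ha2)
    have := hsub x1 hx1 x2 hx2 α ⟨hα0, by linarith⟩ ε hεpos hmem
    obtain ⟨a, haF, p, hp, hape⟩ := Set.mem_add.mp this
    have hfinal : p + (c - ε • u0) ∈ interior Ypos := hA p hp _ hεu0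
    have heq : α • y1 + β • y2 = a + (p + (c - ε • u0)) := by
      have h1 : a + p = ε • u0 + α • a1 + (1 - α) • a2 := hape
      rw [← hy1eq, ← hy2eq, hβα] at *
      have : a + (p + (c - ε • u0)) = (a + p) + c - ε • u0 := by abel
      rw [this, h1, hc, hβα]
      module
    rw [heq]
    exact Set.add_mem_add haF hfinal
  · intro hconv
    obtain ⟨u0, hu0⟩ := hYint
    refine ⟨{u0}, Set.singleton_nonempty _, Bornology.isVonNBounded_singleton _, ?_⟩
    rintro x1 hx1 x2 hx2 α ⟨hα0, hα1⟩ ε hε y hy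
    obtain ⟨s, hs, a2, ha2, hyeq⟩ := Set.mem_add.mp hy
    obtain ⟨s', hs', a1, ha1, hseq⟩ := Set.mem_add.mp hs
    obtain ⟨u, hu, hueq⟩ := Set.mem_smul_set.mp hs'
    rw [Set.mem_singleton_iff] at hu
    subst hu
    obtain ⟨b1, hb1, hb1eq⟩ := Set.mem_smul_set.mp ha1
    obtain ⟨b2, hb2, hb2eq⟩ := Set.mem_smul_set.mp ha2
    have hεu : ε • u ∈ interior Ypos := hB ε hε u hu0
    have hm1 : b1 + ε • u ∈ F + interior Ypos :=
      Set.add_mem_add (Set.mem_biUnion hx1 hb1) hεu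
    have hm2 : b2 + ε • u ∈ F + interior Ypos :=
      Set.add_mem_add (Set.mem_biUnion hx2 hb2) hεu
    have hcomb : α • (b1 + ε • u) + (1 - α) • (b2 + ε • u) ∈ F + interior Ypos :=
      hconv hm1 hm2 hα0.le (by linarith) (by ring)
    have heq : α • (b1 + ε • u) + (1 - α) • (b2 + ε • u) = y := by
      rw [← hyeq, ← hseq, ← hueq, ← hb1eq, ← hb2eq]
      module
    rw [heq] at hcomb
    obtain ⟨a, haF, q, hq, hq2⟩ := Set.mem_add.mp hcomb
    exact Set.mem_add.mpr ⟨a, haF, q, interior_subset hq, hq2⟩
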